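/- Let X be a Banach space with dual X*, T a topological space, and f : T × X → ℝ∪{±∞} such that the epigraph multifunction t ⇒ epi f_t := {(x,α) : f_t(x) ≤ α} is lower semicontinuous (as a set-valued map into X × ℝ). Then the map (t, x*) ↦ f_t*(x*) is lower semicontinuous on T × X*, where X* carries any topology making the duality pairing ⟨·,·⟩ : X × X* → ℝ jointly continuous, and f_t*(x*) := sup_{x ∈ X} (⟨x*, x⟩ − f_t(x)) is the Fenchel conjugate. -/

import Mathlib

open MeasureTheory Topology Filter Set Pointwise
open scoped ENNReal NNReal

noncomputable section

/-- Lower semicontinuity (in the set-valued sense) of `Φ` at every point of `B`,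
relative to `B`. -/
def LscOn {T Y : Type*} [TopologicalSpace T] [TopologicalSpace Y]
    (B : Set T) (Φ : T → Set Y) : Prop :=
  ∀ t ∈ B, ∀ V : Set Y, IsOpen V → (Φ t ∩ V).Nonempty →
    ∀ᶠ s in nhdsWithin t B, (Φ s ∩ V).Nonempty

/-- Epigraph of an extended-real-valued function. -/
def epi {X : Type*} (g : X → EReal) : Set (X × ℝ) :=
  {p : X × ℝ | g p.1 ≤ (p.2 : EReal)}

/-- Strict epigraph. -/
def epis {X : Type*} (g : X → EReal) : Set (X × ℝ) :=
  {p : X × ℝ | g p.1 < (p.2 : EReal)}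

/-- Inner regularity of a measure: every measurable set of finite measure can be
approximated from inside by compact sets. -/
def InnerRegularM {T : Type*} [TopologicalSpace T] [MeasurableSpace T]
    (μ : Measure T) : Prop :=
  ∀ ε : ℝ≥0∞, 0 < ε → ∀ B : Set T, MeasurableSet B → μ B < ⊤ →
    ∃ K ⊆ B, IsCompact K ∧ μ (B \ K) < ε

/-- Lusin integrand. -/
def LusinIntegrand {T X : Type*} [TopologicalSpace T] [MeasurableSpace T]
    [TopologicalSpace X] (μ : Measure T) (f : T → X → EReal) : Prop :=
  ∀ ε : ℝ≥0∞, 0 < ε → ∀ A : Set T, MeasurableSet A → μ A < ⊤ →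
    ∃ B ⊆ A, IsCompact B ∧ μ (A \ B) < ε ∧ LscOn B (fun t => epi (f t))

/-- Uniform Lusin family of integrands. -/
def UniformLusinFamily {T X I : Type*} [TopologicalSpace T] [MeasurableSpace T]
    [TopologicalSpace X] (μ : Measure T) (f : I → T → X → EReal) : Prop :=
  ∀ ε : ℝ≥0∞, 0 < ε → ∀ A : Set T, MeasurableSet A → μ A < ⊤ →
    ∃ B ⊆ A, IsCompact B ∧ μ (A \ B) < ε ∧ ∀ i : I, LscOn B (fun t => epi (f i t))

/-- Scorza-Dragoni function. -/
def ScorzaDragoniFun {T X : Type*} [TopologicalSpace T] [MeasurableSpace T]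
    [TopologicalSpace X] (μ : Measure T) (g : T → X → EReal) : Prop :=
  ∀ ε : ℝ≥0∞, 0 < ε → ∀ A : Set T, MeasurableSet A → μ A < ⊤ →
    ∃ B ⊆ A, IsCompact B ∧ μ (A \ B) < ε ∧
      ContinuousOn (fun p : T × X => g p.1 p.2) (B ×ˢ (Set.univ : Set X))

/-- Lusin multifunction (uniform family version). -/
def UniformLusinMultifamily {T X I : Type*} [TopologicalSpace T] [MeasurableSpace T]
    [TopologicalSpace X] (μ : Measure T) (C : I → T → Set X) : Prop :=
  ∀ ε : ℝ≥0∞, 0 < ε → ∀ A : Set T, MeasurableSet A → μ A < ⊤ →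
    ∃ B ⊆ A, IsCompact B ∧ μ (A \ B) < ε ∧ ∀ i : I, LscOn B (C i)

/-- `g ∈ Γ(X)`: proper, convex (convex epigraph) and lower semicontinuous. -/
def InGamma {X : Type*} [AddCommGroup X] [Module ℝ X] [TopologicalSpace X]
    (g : X → EReal) : Prop :=
  (∃ x, g x ≠ ⊤) ∧ (∀ x, g x ≠ ⊥) ∧ LowerSemicontinuous g ∧ Convex ℝ (epi g)

/-- Admissible integrand. -/
def AdmissibleIntegrand {T X : Type*} [TopologicalSpace T] [MeasurableSpace T]
    [NormedAddCommGroup X] [NormedSpace ℝ X] (μ : Measure T)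
    (f : T → X → EReal) : Prop :=
  ∃ (I : Type) (fi : I → T → X → EReal),
    UniformLusinFamily μ fi ∧ (∀ i t, InGamma (fi i t)) ∧
    ∀ t, epi (f t) = closure (epi (fun x => ⨅ i : I, fi i t x))

/-- Admissible multifunction. -/
def AdmissibleMultifunction {T X : Type*} [TopologicalSpace T] [MeasurableSpace T]
    [NormedAddCommGroup X] [NormedSpace ℝ X] (μ : Measure T)
    (C : T → Set X) : Prop :=
  ∃ (I : Type) (Ci : I → T → Set X),
    UniformLusinMultifamily μ Ci ∧ (∀ i t, IsClosed (Ci i t) ∧ Convex ℝ (Ci i t)) ∧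
    ∀ t, C t = closure (⋃ i : I, Ci i t)

open Classical in
/-- Indicator function with values in `EReal`. -/
def indE {X : Type*} (S : Set X) : X → EReal := fun x => if x ∈ S then 0 else ⊤

/-- Positive part of an extended real, as an `ℝ≥0∞`. -/
def ERealPos (x : EReal) : ℝ≥0∞ := if x = ⊤ then ⊤ else ENNReal.ofReal x.toReal

/-- Upper integral of an extended-real-valued function, with the convention
`+∞ + (-∞) = +∞`. -/
def upInt {T : Type*} [MeasurableSpace T] (μ : Measure T) (g : T → EReal) : EReal :=
  if (∫⁻ t, ERealPos (g t) ∂μ) = ⊤ then ⊤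
  else ((∫⁻ t, ERealPos (g t) ∂μ : ℝ≥0∞) : EReal) - ((∫⁻ t, ERealPos (-(g t)) ∂μ : ℝ≥0∞) : EReal)

end


theorem auxlsc {T X Y : Type*} [TopologicalSpace T] [TopologicalSpace X] [TopologicalSpace Y]
    (b : Y → X → ℝ) (hb : Continuous fun p : X × Y => b p.2 p.1)
    (f : T → X → EReal) (hf : LscOn (Set.univ : Set T) (fun t => epi (f t))) :
    LowerSemicontinuous (fun p : T × Y => ⨆ x : X, ((b p.2 x : EReal) - f p.1 x)) := by
  intro p c hc
  obtain ⟨x, hx⟩ := lt_iSup_iff.mp hc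
  obtain ⟨β, hβ1, hβ2⟩ : ∃ β : ℝ, f p.1 x ≤ (β : EReal) ∧ c < ((b p.2 x - β : ℝ) : EReal) := by
    set a := b p.2 x with ha
    by_cases htop : f p.1 x = ⊤
    · rw [htop] at hx
      exact absurd hx (by simp)
    by_cases hbot : f p.1 x = ⊥
    · have hc' : c < ⊤ := by
        rw [hbot] at hx; exact lt_of_lt_of_le hx le_top
      by_cases hcb : c = ⊥
      · exact ⟨0, hbot ▸ bot_le, by simp [hcb]⟩
      · have hcr : (c.toReal : EReal) = c := EReal.coe_toReal (ne_of_lt hc') hcb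
        refine ⟨a - c.toReal - 1, hbot ▸ bot_le, ?_⟩
        rw [show a - (a - c.toReal - 1) = c.toReal + 1 by ring, ← hcr]
        exact_mod_cast (by linarith : c.toReal < c.toReal + 1)
    · refine ⟨(f p.1 x).toReal, le_of_eq (EReal.coe_toReal htop hbot).symm, ?_⟩
      rw [EReal.coe_sub, EReal.coe_toReal htop hbot]
      exact hx
  have hG : Continuous fun z : (X × ℝ) × Y => ((b z.2 z.1.1 - z.1.2 : ℝ) : EReal) := by
    apply continuous_coe_real_ereal.comp
    exact (hb.comp (continuous_fst.fst.prodMk continuous_snd)).sub continuous_fst.snd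
  have hS : IsOpen {z : (X × ℝ) × Y | c < ((b z.2 z.1.1 - z.1.2 : ℝ) : EReal)} :=
    isOpen_Ioi.preimage hG
  have hmem : ((x, β), p.2) ∈ {z : (X × ℝ) × Y | c < ((b z.2 z.1.1 - z.1.2 : ℝ) : EReal)} := hβ2
  obtain ⟨V, W, hV, hW, hxV, hpW, hVW⟩ := isOpen_prod_iff.mp hS (x, β) p.2 hmem
  have h1 : ∀ᶠ s in 𝓝 p.1, (epi (f s) ∩ V).Nonempty := by
    have := hf p.1 (mem_univ _) V hV ⟨(x, β), hβ1, hxV⟩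
    simpa [nhdsWithin_univ] using this
  have h2 : ∀ᶠ y in 𝓝 p.2, y ∈ W := hW.mem_nhds hpW
  rw [show (𝓝 p : Filter (T × Y)) = 𝓝 p.1 ×ˢ 𝓝 p.2 by rw [nhds_prod_eq]]
  filter_upwards [Filter.Eventually.prod_mk h1 h2] with q hq
  obtain ⟨⟨w, hepi, hwV⟩, hq3⟩ := hq
  have hlt : c < ((b q.2 w.1 - w.2 : ℝ) : EReal) := hVW (Set.mk_mem_prod hwV hq3)
  calc c < ((b q.2 w.1 - w.2 : ℝ) : EReal) := hlt
    _ = (b q.2 w.1 : EReal) - (w.2 : EReal) := EReal.coe_sub _ _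
    _ ≤ (b q.2 w.1 : EReal) - f q.1 w.1 := EReal.sub_le_sub le_rfl hepi
    _ ≤ ⨆ x : X, ((b q.2 x : EReal) - f q.1 x) := le_iSup (fun x => (b q.2 x : EReal) - f q.1 x) w.1

/-- if the epigraph multifunction is lsc, then the conjugate
`(t, x*) ↦ f_t*(x*)` is jointly lower semicontinuous, for any topology on the dual
making the duality pairing jointly continuous. -/
theorem stmt1 {T X : Type*} [TopologicalSpace T]
    [NormedAddCommGroup X] [NormedSpace ℝ X] [CompleteSpace X]
    (τ : TopologicalSpace (X →L[ℝ] ℝ))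
    (hpair : @Continuous (X × (X →L[ℝ] ℝ)) ℝ (@instTopologicalSpaceProd _ _ _ τ) _
      (fun p => p.2 p.1))
    (f : T → X → EReal)
    (hf : LscOn (Set.univ : Set T) (fun t => epi (f t))) :
    @LowerSemicontinuous (T × (X →L[ℝ] ℝ)) EReal (@instTopologicalSpaceProd _ _ _ τ) _
      (fun p => ⨆ x : X, ((p.2 x : EReal) - f p.1 x)) := by
  exact @auxlsc T X (X →L[ℝ] ℝ) _ _ τ (fun y x => y x) hpair f hf
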